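/- As x → ∞, ∑_{n : α(n) ≤ x} Λ(n) = (3 log r)/π² · x² + O(x log x), where r = (1+√5)/2. -/

import Mathlib

open Finset ArithmeticFunction Filter Asymptotics
open scoped ArithmeticFunction.Moebius

noncomputable def fibAlpha (n : ℕ) : ℕ := sInf {m | 0 < m ∧ n ∣ Nat.fib m}

lemma fib_zmod_shift {n d : ℕ} :
    ∀ i : ℕ, ((Nat.fib (i + d) : ZMod n) = Nat.fib i ∧
      (Nat.fib (i + 1 + d) : ZMod n) = Nat.fib (i + 1)) →
      (Nat.fib d : ZMod n) = 0 := by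
  intro i
  induction i with
  | zero => intro h; simpa using h.1
  | succ k ih =>
    intro h
    apply ih
    refine ⟨?_, by simpa [add_right_comm] using h.1⟩
    have h1 : (Nat.fib (k + 1 + d) : ZMod n) = Nat.fib (k + 1) := h.1
    have h2 : (Nat.fib (k + 2 + d) : ZMod n) = Nat.fib (k + 2) := by
      simpa [add_right_comm] using h.2
    have e1 : (Nat.fib (k + 2 + d) : ZMod n)
        = (Nat.fib (k + d) : ZMod n) + (Nat.fib (k + 1 + d) : ZMod n) := by
      rw [show k + 2 + d = (k + d) + 2 by ring, Nat.fib_add_two]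
      push_cast
      rw [show k + d + 1 = k + 1 + d by ring]
    have e2 : (Nat.fib (k + 2) : ZMod n)
        = (Nat.fib k : ZMod n) + (Nat.fib (k + 1) : ZMod n) := by
      rw [Nat.fib_add_two]; push_cast; ring
    have := e1.symm.trans (h2.trans e2)
    rw [h1] at this
    exact add_right_cancel this

lemma exists_pos_dvd_fib {n : ℕ} (hn : n ≠ 0) : ∃ m, 0 < m ∧ n ∣ Nat.fib m := by
  haveI : NeZero n := ⟨hn⟩
  obtain ⟨i, j, hij, hf⟩ := Finite.exists_ne_map_eq_of_infinite
    (fun k : ℕ => ((Nat.fib k : ZMod n), (Nat.fib (k + 1) : ZMod n)))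
  wlog hlt : i < j generalizing i j
  · exact this j i hij.symm hf.symm (by omega)
  have hd : (Nat.fib (j - i) : ZMod n) = 0 := by
    apply fib_zmod_shift i
    have h1 : i + (j - i) = j := by omega
    have h2 : i + 1 + (j - i) = j + 1 := by omega
    constructor
    · rw [h1]; exact (congrArg Prod.fst hf).symm
    · rw [h2]; exact (congrArg Prod.snd hf).symm
  exact ⟨j - i, by omega, (ZMod.natCast_eq_zero_iff _ _).mp hd⟩

lemma fibAlpha_mem {n : ℕ} (hn : n ≠ 0) :
    0 < fibAlpha n ∧ n ∣ Nat.fib (fibAlpha n) :=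
  Nat.sInf_mem (exists_pos_dvd_fib hn)

lemma fibAlpha_le {n m : ℕ} (hm : 0 < m) (h : n ∣ Nat.fib m) : fibAlpha n ≤ m :=
  Nat.sInf_le ⟨hm, h⟩

lemma dvd_fib_iff {n : ℕ} (hn : n ≠ 0) (m : ℕ) :
    n ∣ Nat.fib m ↔ fibAlpha n ∣ m := by
  obtain ⟨hpos, hdvd⟩ := fibAlpha_mem hn
  constructor
  · intro h
    rcases Nat.eq_zero_or_pos m with rfl | hm
    · exact Dvd.intro 0 rfl
    have hg : n ∣ Nat.fib (Nat.gcd m (fibAlpha n)) := by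
      rw [Nat.fib_gcd]
      exact Nat.dvd_gcd h hdvd
    have hgpos : 0 < Nat.gcd m (fibAlpha n) := Nat.gcd_pos_of_pos_left _ hm
    have h1 : fibAlpha n ≤ Nat.gcd m (fibAlpha n) := fibAlpha_le hgpos hg
    have h2 : Nat.gcd m (fibAlpha n) ≤ fibAlpha n := Nat.le_of_dvd hpos (Nat.gcd_dvd_right _ _)
    have : Nat.gcd m (fibAlpha n) = fibAlpha n := le_antisymm h2 h1
    rw [← this]
    exact Nat.gcd_dvd_left _ _
  · intro h
    exact hdvd.trans (Nat.fib_dvd _ _ h)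

open Real goldenRatio

lemma pow_le_fib : ∀ m : ℕ, φ ^ m ≤ (Nat.fib (m + 2) : ℝ)
  | 0 => by norm_num
  | 1 => by
      rw [pow_one]
      have h5 : Real.sqrt 5 < 3 := by
        nlinarith [Real.sq_sqrt (by norm_num : (5:ℝ) ≥ 0), Real.sqrt_nonneg 5]
      simp only [goldenRatio]
      norm_num [Nat.fib]
      nlinarith
  | (m + 2) => by
      have h1 := pow_le_fib m
      have h2 := pow_le_fib (m + 1)
      have : φ ^ (m + 2) = φ ^ m + φ ^ (m + 1) := by
        rw [show m + 2 = m + 2 by rfl, pow_add, goldenRatio_sq, pow_add, pow_one]; ring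
      rw [this, show m + 2 + 2 = (m + 2) + 2 by rfl, Nat.fib_add_two]
      push_cast
      linarith

lemma fib_le_pow : ∀ m : ℕ, (Nat.fib (m + 1) : ℝ) ≤ φ ^ m
  | 0 => by norm_num
  | 1 => by
      rw [pow_one]
      have := one_lt_goldenRatio
      norm_num [Nat.fib]
      linarith
  | (m + 2) => by
      have h1 := fib_le_pow m
      have h2 := fib_le_pow (m + 1)
      have h3 : φ ^ (m + 2) = φ ^ m + φ ^ (m + 1) := by
        rw [pow_add, goldenRatio_sq, pow_add, pow_one]; ring
      rw [show m + 2 + 1 = (m + 1) + 2 by rfl, Nat.fib_add_two]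
      push_cast
      linarith

lemma log_gold_pos : 0 < Real.log φ := Real.log_pos one_lt_goldenRatio

lemma log_gold_le_one : Real.log φ ≤ 1 := by
  have h := Real.log_le_sub_one_of_pos goldenRatio_pos
  have h5 : Real.sqrt 5 < 3 := by
    nlinarith [Real.sq_sqrt (by norm_num : (5:ℝ) ≥ 0), Real.sqrt_nonneg 5]
  simp only [goldenRatio] at h ⊢
  nlinarith

lemma log_fib_bound {m : ℕ} (hm : 1 ≤ m) :
    |Real.log (Nat.fib m) - m * Real.log φ| ≤ 2 * Real.log φ := by
  rcases Nat.lt_or_ge m 2 with h2 | h2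
  · interval_cases m
    have h1 : (Nat.fib 1 : ℝ) = 1 := by norm_num
    rw [h1, Real.log_one, abs_le]
    push_cast
    constructor <;> nlinarith [log_gold_pos]
  · obtain ⟨k, rfl⟩ : ∃ k, m = k + 2 := ⟨m - 2, by omega⟩
    have hup : Real.log (Nat.fib (k + 2)) ≤ (k + 1) * Real.log φ := by
      calc Real.log (Nat.fib (k + 2)) ≤ Real.log (φ ^ (k + 1)) := by
            apply Real.log_le_log (by exact_mod_cast Nat.fib_pos.mpr (by omega))
            exact fib_le_pow (k + 1)
        _ = (k + 1) * Real.log φ := by rw [Real.log_pow]; push_cast; ring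
    have hlo : (k : ℝ) * Real.log φ ≤ Real.log (Nat.fib (k + 2)) := by
      calc (k : ℝ) * Real.log φ = Real.log (φ ^ k) := by rw [Real.log_pow]
        _ ≤ Real.log (Nat.fib (k + 2)) := by
            apply Real.log_le_log (by positivity)
            exact pow_le_fib k
    rw [abs_le]
    push_cast
    constructor <;> nlinarith [log_gold_pos]

noncomputable def fibH (k : ℕ) : ℝ := ∑ e ∈ Icc 1 k, Real.log (Nat.fib e)

lemma sum_Icc_id_cast (k : ℕ) : ∑ e ∈ Icc 1 k, (e : ℝ) = k * (k + 1) / 2 := by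
  induction k with
  | zero => simp
  | succ n ih =>
    rw [Finset.sum_Icc_succ_top (by omega : 1 ≤ n + 1), ih]
    push_cast
    ring

lemma fibH_bound (k : ℕ) : |fibH k - Real.log φ * k ^ 2 / 2| ≤ 3 * (k : ℝ) := by
  have e1 : ∑ e ∈ Icc 1 k, (Real.log (Nat.fib e) - (e : ℝ) * Real.log φ)
      = fibH k - ((k : ℝ) * (k + 1) / 2) * Real.log φ := by
    unfold fibH
    rw [Finset.sum_sub_distrib, ← Finset.sum_mul, sum_Icc_id_cast]
  have key : fibH k - Real.log φ * (k : ℝ) ^ 2 / 2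
      = (∑ e ∈ Icc 1 k, (Real.log (Nat.fib e) - (e : ℝ) * Real.log φ)) + Real.log φ * k / 2 := by
    rw [e1]; ring
  rw [key]
  have h1 : |∑ e ∈ Icc 1 k, (Real.log (Nat.fib e) - e * Real.log φ)| ≤ 2 * Real.log φ * k := by
    calc |∑ e ∈ Icc 1 k, (Real.log (Nat.fib e) - e * Real.log φ)|
        ≤ ∑ e ∈ Icc 1 k, |Real.log (Nat.fib e) - e * Real.log φ| :=
          Finset.abs_sum_le_sum_abs _ _
      _ ≤ ∑ _e ∈ Icc 1 k, 2 * Real.log φ :=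
          Finset.sum_le_sum (fun e he => log_fib_bound (Finset.mem_Icc.mp he).1)
      _ = 2 * Real.log φ * k := by
          rw [Finset.sum_const, Nat.card_Icc]
          simp [nsmul_eq_mul]
          ring
  have h2 := abs_add_le (∑ e ∈ Icc 1 k, (Real.log (Nat.fib e) - e * Real.log φ))
    (Real.log φ * k / 2)
  have hk : (0:ℝ) ≤ k := Nat.cast_nonneg k
  have h3 : |Real.log φ * k / 2| = Real.log φ * k / 2 :=
    abs_of_nonneg (by nlinarith [log_gold_pos])
  nlinarith [log_gold_pos, log_gold_le_one]

noncomputable def fibG (m : ℕ) : ℝ :=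
  ∑ n ∈ (Nat.fib m).divisors.filter (fun n => fibAlpha n = m), Λ n

lemma disj_aux (s : Finset ℕ) :
    Set.PairwiseDisjoint ↑s
      (fun d => (Nat.fib d).divisors.filter (fun n => fibAlpha n = d)) := by
  intro a _ b _ hab
  refine Finset.disjoint_left.mpr (fun n h1 h2 => ?_)
  simp only [Finset.mem_filter] at h1 h2
  exact hab (h1.2 ▸ h2.2)

lemma sum_fibG_divisors {m : ℕ} (hm : 0 < m) :
    ∑ d ∈ m.divisors, fibG d = Real.log (Nat.fib m) := by
  rw [← ArithmeticFunction.vonMangoldt_sum]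
  simp only [fibG]
  rw [← Finset.sum_biUnion (disj_aux _)]
  congr 1
  ext n
  simp only [Finset.mem_biUnion, Nat.mem_divisors, Finset.mem_filter]
  constructor
  · rintro ⟨d, ⟨hdm, -⟩, ⟨hnd, -⟩, rfl⟩
    exact ⟨hnd.trans (Nat.fib_dvd _ _ hdm), (Nat.fib_pos.mpr hm).ne'⟩
  · rintro ⟨hnm, hfm⟩
    have hn : n ≠ 0 := by rintro rfl; exact hfm (zero_dvd_iff.mp hnm)
    obtain ⟨hpos, hdvd⟩ := fibAlpha_mem hn
    refine ⟨fibAlpha n, ⟨(dvd_fib_iff hn m).mp hnm, hm.ne'⟩, ⟨hdvd, ?_⟩, rfl⟩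
    exact (Nat.fib_pos.mpr hpos).ne'

lemma fibG_eq_moebius {m : ℕ} (hm : 0 < m) :
    fibG m = ∑ p ∈ m.divisorsAntidiagonal, (μ p.1 : ℤ) • Real.log (Nat.fib p.2) := by
  have := (ArithmeticFunction.sum_eq_iff_sum_smul_moebius_eq
    (f := fibG) (g := fun m => Real.log (Nat.fib m))).mp
    (fun n hn => sum_fibG_divisors hn) m hm
  exact this.symm

lemma L_eq_sum_fibG (N : ℕ) :
    (∑ n ∈ (Icc 1 (Nat.fib N)).filter (fun n => fibAlpha n ≤ N), Λ n)
      = ∑ m ∈ Icc 1 N, fibG m := by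
  simp only [fibG]
  rw [← Finset.sum_biUnion (disj_aux _)]
  congr 1
  ext n
  simp only [Finset.mem_biUnion, Nat.mem_divisors, Finset.mem_filter, Finset.mem_Icc]
  constructor
  · rintro ⟨⟨hn1, hnN⟩, hαN⟩
    have hn : n ≠ 0 := by omega
    obtain ⟨hpos, hdvd⟩ := fibAlpha_mem hn
    exact ⟨fibAlpha n, ⟨hpos, hαN⟩, ⟨hdvd, (Nat.fib_pos.mpr hpos).ne'⟩, rfl⟩
  · rintro ⟨d, ⟨hd1, hdN⟩, ⟨hnd, hfd⟩, rfl⟩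
    have h1 : 1 ≤ n := Nat.one_le_iff_ne_zero.mpr (by rintro rfl; exact hfd (zero_dvd_iff.mp hnd))
    exact ⟨⟨h1, (Nat.le_of_dvd (Nat.pos_of_ne_zero hfd) hnd).trans (Nat.fib_mono hdN)⟩, hdN⟩

lemma sum_Icc_antidiagonal {M : Type*} [AddCommMonoid M] (F : ℕ × ℕ → M) (N : ℕ) :
    ∑ m ∈ Icc 1 N, ∑ p ∈ m.divisorsAntidiagonal, F p
      = ∑ d ∈ Icc 1 N, ∑ e ∈ Icc 1 (N / d), F (d, e) := by
  have hdisj : Set.PairwiseDisjoint ↑(Icc 1 N) (fun m : ℕ => m.divisorsAntidiagonal) := by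
    intro a _ b _ hab
    refine Finset.disjoint_left.mpr (fun p h1 h2 => ?_)
    rw [Nat.mem_divisorsAntidiagonal] at h1 h2
    exact hab (h1.1.symm.trans h2.1)
  rw [← Finset.sum_biUnion hdisj]
  have hset : (Icc 1 N).biUnion (fun m : ℕ => m.divisorsAntidiagonal)
      = ((Icc 1 N) ×ˢ (Icc 1 N)).filter (fun p => p.1 * p.2 ≤ N) := by
    ext p
    simp only [Finset.mem_biUnion, Nat.mem_divisorsAntidiagonal, Finset.mem_filter,
      Finset.mem_product, Finset.mem_Icc]
    constructor
    · rintro ⟨m, ⟨h1m, hmN⟩, hpm, -⟩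
      have hp1 : 1 ≤ p.1 := by
        by_contra h
        have h0 : p.1 = 0 := by omega
        rw [h0, zero_mul] at hpm; omega
      have hp2 : 1 ≤ p.2 := by
        by_contra h
        have : p.2 = 0 := by omega
        simp [this] at hpm; omega
      have hle : p.1 * p.2 ≤ N := hpm ▸ hmN
      refine ⟨⟨⟨hp1, ?_⟩, hp2, ?_⟩, hle⟩
      · calc p.1 ≤ p.1 * p.2 := Nat.le_mul_of_pos_right _ hp2
          _ ≤ N := hle
      · calc p.2 ≤ p.1 * p.2 := Nat.le_mul_of_pos_left _ hp1
          _ ≤ N := hle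
    · rintro ⟨⟨⟨hp1, -⟩, hp2, -⟩, hle⟩
      exact ⟨p.1 * p.2, ⟨Nat.one_le_iff_ne_zero.mpr (Nat.mul_ne_zero (by omega) (by omega)), hle⟩,
        rfl, Nat.mul_ne_zero (by omega) (by omega)⟩
  rw [hset, Finset.sum_filter, Finset.sum_product]
  refine Finset.sum_congr rfl (fun d hd => ?_)
  rw [Finset.mem_Icc] at hd
  rw [← Finset.sum_filter]
  congr 1
  ext e
  simp only [Finset.mem_filter, Finset.mem_Icc]
  have hd0 : 0 < d := hd.1
  constructor
  · rintro ⟨⟨h1e, -⟩, hle⟩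
    exact ⟨h1e, (Nat.le_div_iff_mul_le hd0).mpr (by rwa [mul_comm])⟩
  · rintro ⟨h1e, hle⟩
    have : e * d ≤ N := (Nat.le_div_iff_mul_le hd0).mp hle
    refine ⟨⟨h1e, ?_⟩, by rwa [mul_comm]⟩
    calc e ≤ e * d := Nat.le_mul_of_pos_right _ hd0
      _ ≤ N := this

lemma moebius_summable : Summable (fun d : ℕ => (μ d : ℝ) / (d : ℝ) ^ 2) := by
  apply Summable.of_norm_bounded (g := fun d : ℕ => ((d : ℝ) ^ 2)⁻¹)
  · exact Real.summable_one_div_nat_pow.mpr one_lt_two |>.congr (by intro n; rw [one_div])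
  · intro d
    rcases Nat.eq_zero_or_pos d with rfl | hd
    · simp
    rw [norm_div, norm_pow]
    simp only [Real.norm_natCast]
    rw [div_le_iff₀ (by positivity), inv_mul_cancel₀ (by positivity)]
    have := abs_moebius_le_one (n := d)
    rw [Real.norm_eq_abs]
    exact_mod_cast this

lemma moebius_tsum_eq : ∑' d : ℕ, (μ d : ℝ) / (d : ℝ) ^ 2 = 6 / Real.pi ^ 2 := by
  have h2 : (1 : ℝ) < (2 : ℂ).re := by norm_num
  have hz := ArithmeticFunction.LSeries_zeta_mul_Lseries_moebius (s := 2) h2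
  rw [ArithmeticFunction.LSeries_zeta_eq_riemannZeta h2, riemannZeta_two] at hz
  have hμ : LSeries (fun n => (μ n : ℂ)) 2 = 6 / (Real.pi : ℂ) ^ 2 := by
    have hpi : ((Real.pi : ℂ)) ^ 2 ≠ 0 := by
      simp [Real.pi_ne_zero]
    field_simp at hz ⊢
    linear_combination hz
  have hterm : ∀ n : ℕ, (((μ n : ℝ) / (n : ℝ) ^ 2 : ℝ) : ℂ) = LSeries.term (fun n => (μ n : ℂ)) 2 n := by
    intro n
    rcases eq_or_ne n 0 with rfl | hn
    · simp [LSeries.term]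
    · rw [LSeries.term_of_ne_zero hn]
      rw [show ((2 : ℂ)) = ((2 : ℕ) : ℂ) by norm_num, Complex.cpow_natCast]
      push_cast
      ring
  have : ((∑' d : ℕ, (μ d : ℝ) / (d : ℝ) ^ 2 : ℝ) : ℂ) = 6 / (Real.pi : ℂ) ^ 2 := by
    rw [Complex.ofReal_tsum]
    rw [tsum_congr hterm]
    exact hμ
  have h6 : ((6 / Real.pi ^ 2 : ℝ) : ℂ) = 6 / (Real.pi : ℂ) ^ 2 := by push_cast; ring
  exact_mod_cast this.trans h6.symm

lemma tail_partial_bound {N : ℕ} (hN : 1 ≤ N) :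
    ∀ M : ℕ, ∑ n ∈ range M, (1 : ℝ) / ((n : ℝ) + N + 1) ^ 2 ≤ 1 / N - 1 / ((M : ℝ) + N) := by
  intro M
  induction M with
  | zero => simp
  | succ M ih =>
    rw [Finset.sum_range_succ]
    have hN' : (1 : ℝ) ≤ (N : ℝ) := by exact_mod_cast hN
    set a : ℝ := (M : ℝ) + N with ha
    have ha1 : 1 ≤ a := by
      have : (0:ℝ) ≤ (M:ℝ) := Nat.cast_nonneg M
      linarith
    have hstep : (1 : ℝ) / ((M : ℝ) + N + 1) ^ 2 ≤ 1 / a - 1 / (a + 1) := by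
      have h1 : (1:ℝ) / a - 1 / (a + 1) = 1 / (a * (a + 1)) := by
        field_simp
        ring
      rw [h1, show (M : ℝ) + N + 1 = a + 1 by rw [ha]]
      apply one_div_le_one_div_of_le (by nlinarith)
      nlinarith
    have hM1 : ((M + 1 : ℕ) : ℝ) + N = a + 1 := by push_cast; ring
    rw [hM1]
    linarith

lemma tail_tsum_bound {N : ℕ} (hN : 1 ≤ N) :
    |∑' n : ℕ, (μ (n + (N + 1)) : ℝ) / ((n + (N + 1) : ℕ) : ℝ) ^ 2| ≤ 1 / (N:ℝ) := by
  set f : ℕ → ℝ := fun n => (μ (n + (N + 1)) : ℝ) / ((n + (N + 1) : ℕ) : ℝ) ^ 2 with hf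
  set g : ℕ → ℝ := fun n => (1 : ℝ) / ((n : ℝ) + N + 1) ^ 2 with hg
  have hgsum : Summable g := by
    have h0 : Summable (fun n : ℕ => (1 : ℝ) / ((n : ℝ)) ^ 2) :=
      Real.summable_one_div_nat_pow.mpr one_lt_two
    have h1 := (summable_nat_add_iff (N + 1)).mpr h0
    apply h1.congr
    intro n
    push_cast
    try ring
  have hfg : ∀ n, |f n| ≤ g n := by
    intro n
    rw [hf, hg]
    simp only
    rw [abs_div, abs_pow]
    have hc : |((n + (N + 1) : ℕ) : ℝ)| = (n : ℝ) + N + 1 := by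
      rw [abs_of_nonneg (by positivity)]
      push_cast; ring
    rw [hc]
    have habs : |(μ (n + (N + 1)) : ℝ)| ≤ 1 := by
      have := abs_moebius_le_one (n := n + (N + 1))
      exact_mod_cast this
    exact div_le_div₀ zero_le_one habs (by positivity) le_rfl
  have hfsum : Summable fun n => |f n| :=
    Summable.of_nonneg_of_le (fun n => abs_nonneg _) hfg hgsum
  have hgle : ∑' n, g n ≤ 1 / N := by
    apply Summable.tsum_le_of_sum_le hgsum
    intro F
    obtain ⟨M, hM⟩ := F.exists_nat_subset_range
    calc ∑ n ∈ F, g n ≤ ∑ n ∈ range M, g n :=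
          Finset.sum_le_sum_of_subset_of_nonneg hM (fun n _ _ => by positivity)
      _ ≤ 1 / N - 1 / ((M : ℝ) + N) := tail_partial_bound hN M
      _ ≤ 1 / N := by
          have : (0:ℝ) ≤ 1 / ((M : ℝ) + N) := by positivity
          linarith
  calc |∑' n, f n| ≤ ∑' n, |f n| := by
        simpa [Real.norm_eq_abs] using
          norm_tsum_le_tsum_norm (f := f) (by simpa [Real.norm_eq_abs] using hfsum)
      _ ≤ ∑' n, g n := Summable.tsum_le_tsum hfg hfsum hgsum
      _ ≤ 1 / N := hgle

lemma moebius_partial_bound {N : ℕ} (hN : 1 ≤ N) :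
    |(∑ d ∈ Icc 1 N, (μ d : ℝ) / (d : ℝ) ^ 2) - 6 / Real.pi ^ 2| ≤ 1 / (N:ℝ) := by
  have hsplit := Summable.sum_add_tsum_nat_add (f := fun d : ℕ => (μ d : ℝ) / (d : ℝ) ^ 2) (N + 1) moebius_summable
  have hrange : ∑ d ∈ range (N + 1), (μ d : ℝ) / (d : ℝ) ^ 2
      = ∑ d ∈ Icc 1 N, (μ d : ℝ) / (d : ℝ) ^ 2 := by
    have h : range (N + 1) = insert 0 (Icc 1 N) := by
      ext x
      simp only [Finset.mem_range, Finset.mem_insert, Finset.mem_Icc]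
      omega
    rw [h, Finset.sum_insert (by simp)]
    simp
  rw [moebius_tsum_eq, hrange] at hsplit
  have : (∑ d ∈ Icc 1 N, (μ d : ℝ) / (d : ℝ) ^ 2) - 6 / Real.pi ^ 2
      = -(∑' n : ℕ, (μ (n + (N + 1)) : ℝ) / ((n + (N + 1) : ℕ) : ℝ) ^ 2) := by
    rw [← hsplit]
    push_cast
    ring
  rw [this, abs_neg]
  exact tail_tsum_bound hN


lemma L_eq_A (N : ℕ) :
    (∑ n ∈ (Icc 1 (Nat.fib N)).filter (fun n => fibAlpha n ≤ N), Λ n)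
      = ∑ d ∈ Icc 1 N, (μ d : ℝ) * fibH (N / d) := by
  rw [L_eq_sum_fibG]
  rw [Finset.sum_congr rfl (fun m hm => fibG_eq_moebius (Finset.mem_Icc.mp hm).1)]
  rw [sum_Icc_antidiagonal (F := fun p : ℕ × ℕ => (μ p.1 : ℤ) • Real.log (Nat.fib p.2)) N]
  refine Finset.sum_congr rfl fun d _ => ?_
  unfold fibH
  rw [Finset.mul_sum]
  refine Finset.sum_congr rfl fun e _ => ?_
  rw [zsmul_eq_mul]

lemma main_est {N : ℕ} (hN : 1 ≤ N) :
    |(∑ d ∈ Icc 1 N, (μ d : ℝ) * fibH (N / d))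
      - 3 * Real.log φ / Real.pi ^ 2 * (N : ℝ) ^ 2| ≤ 10 * N * (1 + Real.log N) := by
  have hNR : (1:ℝ) ≤ (N:ℝ) := by exact_mod_cast hN
  have hlogN : 0 ≤ Real.log N := Real.log_nonneg hNR
  have hharm : ∑ d ∈ Icc 1 N, ((d:ℝ))⁻¹ ≤ 1 + Real.log N := by
    have h1 := harmonic_le_one_add_log N
    rw [harmonic_eq_sum_Icc] at h1
    push_cast at h1
    exact h1
  -- decomposition
  have hdecomp : ∀ d ∈ Icc 1 N, (μ d : ℝ) * fibH (N / d)
      = (μ d : ℝ) * (fibH (N / d) - Real.log φ * ((N / d : ℕ) : ℝ) ^ 2 / 2)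
        + (μ d : ℝ) * (Real.log φ / 2) * (((N / d : ℕ) : ℝ) ^ 2 - ((N:ℝ) / d) ^ 2)
        + (μ d : ℝ) / (d:ℝ) ^ 2 * (Real.log φ / 2) * (N:ℝ) ^ 2 := by
    intro d hd
    have hd1 : 1 ≤ d := (Finset.mem_Icc.mp hd).1
    have hd0 : (d:ℝ) ≠ 0 := by positivity
    field_simp
    ring
  rw [Finset.sum_congr rfl hdecomp]
  rw [Finset.sum_add_distrib, Finset.sum_add_distrib]
  set S1 := ∑ d ∈ Icc 1 N, (μ d : ℝ) * (fibH (N / d) - Real.log φ * ((N / d : ℕ) : ℝ) ^ 2 / 2)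
  set S2 := ∑ d ∈ Icc 1 N, (μ d : ℝ) * (Real.log φ / 2) * (((N / d : ℕ) : ℝ) ^ 2 - ((N:ℝ) / d) ^ 2)
  set S3 := ∑ d ∈ Icc 1 N, (μ d : ℝ) / (d:ℝ) ^ 2 * (Real.log φ / 2) * (N:ℝ) ^ 2
  have hmoeb : ∀ d : ℕ, |(μ d : ℝ)| ≤ 1 := by
    intro d
    exact_mod_cast abs_moebius_le_one (n := d)
  have hdivle : ∀ d ∈ Icc 1 N, ((N / d : ℕ) : ℝ) ≤ (N:ℝ) / d := fun d _ => Nat.cast_div_le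
  have hdivlt : ∀ d ∈ Icc 1 N, (N:ℝ) / d < ((N / d : ℕ) : ℝ) + 1 := by
    intro d hd
    have hd1 : 1 ≤ d := (Finset.mem_Icc.mp hd).1
    have hdpos : (0:ℝ) < (d:ℝ) := by exact_mod_cast hd1
    have h := Nat.lt_mul_div_succ N (show 0 < d by omega)
    rw [div_lt_iff₀ hdpos, mul_comm]
    exact_mod_cast h
  -- S1 bound
  have hS1 : |S1| ≤ 3 * N * (1 + Real.log N) := by
    calc |S1| ≤ ∑ d ∈ Icc 1 N, |(μ d : ℝ) * (fibH (N / d) - Real.log φ * ((N / d : ℕ) : ℝ) ^ 2 / 2)| :=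
          Finset.abs_sum_le_sum_abs _ _
      _ ≤ ∑ d ∈ Icc 1 N, 3 * (N:ℝ) * (d:ℝ)⁻¹ := by
          refine Finset.sum_le_sum fun d hd => ?_
          have hd1 : 1 ≤ d := (Finset.mem_Icc.mp hd).1
          have hdpos : (0:ℝ) < (d:ℝ) := by exact_mod_cast hd1
          rw [abs_mul]
          calc |(μ d : ℝ)| * |fibH (N / d) - Real.log φ * ((N / d : ℕ) : ℝ) ^ 2 / 2|
              ≤ 1 * (3 * ((N / d : ℕ) : ℝ)) := by
                apply mul_le_mul (hmoeb d) ?_ (abs_nonneg _) zero_le_one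
                exact fibH_bound (N / d)
            _ = 3 * ((N / d : ℕ) : ℝ) := by ring
            _ ≤ 3 * ((N:ℝ) / d) := by
                have := hdivle d hd
                linarith
            _ = 3 * (N:ℝ) * (d:ℝ)⁻¹ := by field_simp
      _ = 3 * (N:ℝ) * ∑ d ∈ Icc 1 N, ((d:ℝ))⁻¹ := by rw [← Finset.mul_sum]
      _ ≤ 3 * N * (1 + Real.log N) := by
          apply mul_le_mul_of_nonneg_left hharm
          positivity
  -- S2 bound
  have hS2 : |S2| ≤ N * (1 + Real.log N) := by
    calc |S2| ≤ ∑ d ∈ Icc 1 N, |(μ d : ℝ) * (Real.log φ / 2) * (((N / d : ℕ) : ℝ) ^ 2 - ((N:ℝ) / d) ^ 2)| :=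
          Finset.abs_sum_le_sum_abs _ _
      _ ≤ ∑ d ∈ Icc 1 N, (N:ℝ) * (d:ℝ)⁻¹ := by
          refine Finset.sum_le_sum fun d hd => ?_
          have hd1 : 1 ≤ d := (Finset.mem_Icc.mp hd).1
          have hdpos : (0:ℝ) < (d:ℝ) := by exact_mod_cast hd1
          set y : ℝ := ((N / d : ℕ) : ℝ)
          set x : ℝ := (N:ℝ) / d
          have hyx : y ≤ x := hdivle d hd
          have hxy1 : x < y + 1 := hdivlt d hd
          have hy0 : 0 ≤ y := Nat.cast_nonneg _
          have hx0 : 0 ≤ x := by positivity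
          have habs2 : |y ^ 2 - x ^ 2| ≤ 2 * x := by
            rw [abs_le]
            constructor <;> nlinarith
          rw [abs_mul, abs_mul]
          have hlg : |Real.log φ / 2| ≤ 1 / 2 := by
            rw [abs_of_nonneg (by nlinarith [log_gold_pos])]
            nlinarith [log_gold_le_one]
          calc |(μ d : ℝ)| * |Real.log φ / 2| * |y ^ 2 - x ^ 2|
              ≤ 1 * (1 / 2) * (2 * x) := by
                apply mul_le_mul ?_ habs2 (abs_nonneg _) (by norm_num)
                apply mul_le_mul (hmoeb d) hlg (abs_nonneg _) zero_le_one
            _ = x := by ring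
            _ = (N:ℝ) * (d:ℝ)⁻¹ := by
                rw [show x = (N:ℝ) / d from rfl, div_eq_mul_inv]
      _ = (N:ℝ) * ∑ d ∈ Icc 1 N, ((d:ℝ))⁻¹ := by rw [← Finset.mul_sum]
      _ ≤ N * (1 + Real.log N) := by
          apply mul_le_mul_of_nonneg_left hharm
          positivity
  -- S3
  have hS3 : |S3 - 3 * Real.log φ / Real.pi ^ 2 * (N : ℝ) ^ 2| ≤ (N:ℝ) := by
    have hS3eq : S3 = (∑ d ∈ Icc 1 N, (μ d : ℝ) / (d:ℝ) ^ 2) * (Real.log φ / 2) * (N:ℝ) ^ 2 := by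
      rw [Finset.sum_mul, Finset.sum_mul]
    have hkey : S3 - 3 * Real.log φ / Real.pi ^ 2 * (N : ℝ) ^ 2
        = ((∑ d ∈ Icc 1 N, (μ d : ℝ) / (d:ℝ) ^ 2) - 6 / Real.pi ^ 2)
          * (Real.log φ / 2) * (N:ℝ) ^ 2 := by
      rw [hS3eq]
      have hpi : Real.pi ≠ 0 := Real.pi_ne_zero
      field_simp
      ring
    rw [hkey, abs_mul, abs_mul]
    have h1 := moebius_partial_bound hN
    have h2 : |Real.log φ / 2| ≤ 1 / 2 := by
      rw [abs_of_nonneg (by nlinarith [log_gold_pos])]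
      nlinarith [log_gold_le_one]
    have h3 : |(N:ℝ) ^ 2| = (N:ℝ) ^ 2 := abs_of_nonneg (by positivity)
    rw [h3]
    calc |(∑ d ∈ Icc 1 N, (μ d : ℝ) / (d:ℝ) ^ 2) - 6 / Real.pi ^ 2| * |Real.log φ / 2| * (N:ℝ) ^ 2
        ≤ (1 / (N:ℝ)) * (1 / 2) * (N:ℝ) ^ 2 := by
          apply mul_le_mul_of_nonneg_right ?_ (by positivity)
          apply mul_le_mul h1 h2 (abs_nonneg _) (by positivity)
      _ = (N:ℝ) / 2 := by
          field_simp
      _ ≤ (N:ℝ) := by linarith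
  calc |S1 + S2 + S3 - 3 * Real.log φ / Real.pi ^ 2 * (N : ℝ) ^ 2|
      ≤ |S1| + |S2| + |S3 - 3 * Real.log φ / Real.pi ^ 2 * (N : ℝ) ^ 2| := by
        have := abs_add_le (S1 + S2) (S3 - 3 * Real.log φ / Real.pi ^ 2 * (N : ℝ) ^ 2)
        have h2 := abs_add_le S1 S2
        calc |S1 + S2 + S3 - 3 * Real.log φ / Real.pi ^ 2 * (N : ℝ) ^ 2|
            = |(S1 + S2) + (S3 - 3 * Real.log φ / Real.pi ^ 2 * (N : ℝ) ^ 2)| := by ring_nf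
          _ ≤ |S1 + S2| + |S3 - 3 * Real.log φ / Real.pi ^ 2 * (N : ℝ) ^ 2| := this
          _ ≤ |S1| + |S2| + |S3 - 3 * Real.log φ / Real.pi ^ 2 * (N : ℝ) ^ 2| := by linarith
      _ ≤ 3 * N * (1 + Real.log N) + N * (1 + Real.log N) + N := by linarith
      _ ≤ 10 * N * (1 + Real.log N) := by nlinarith

theorem vonMangoldt_sum_alpha_asymp :
    (fun x : ℝ =>
        (∑ n ∈ (Icc 1 (Nat.fib ⌊x⌋₊)).filter (fun n => fibAlpha n ≤ ⌊x⌋₊), Λ n)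
          - 3 * Real.log ((1 + Real.sqrt 5) / 2) / Real.pi ^ 2 * x ^ 2)
      =O[atTop] fun x : ℝ => x * Real.log x := by
  rw [Asymptotics.isBigO_iff]
  refine ⟨22, ?_⟩
  filter_upwards [Filter.eventually_ge_atTop (3:ℝ)] with x hx
  set N := ⌊x⌋₊ with hNdef
  have hx0 : (0:ℝ) < x := by linarith
  have hN1 : 1 ≤ N := Nat.le_floor (by exact_mod_cast (by linarith : (1:ℝ) ≤ x))
  have hNx : (N:ℝ) ≤ x := Nat.floor_le (le_of_lt hx0)
  have hxN : x < (N:ℝ) + 1 := Nat.lt_floor_add_one x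
  have hNR : (1:ℝ) ≤ (N:ℝ) := by exact_mod_cast hN1
  have hlogx : 1 ≤ Real.log x := by
    rw [Real.le_log_iff_exp_le hx0]
    calc Real.exp 1 ≤ 2.7182818286 := le_of_lt Real.exp_one_lt_d9
      _ ≤ 3 := by norm_num
      _ ≤ x := hx
  have hlogN : Real.log N ≤ Real.log x := Real.log_le_log (by linarith) hNx
  have hc : 3 * Real.log φ / Real.pi ^ 2 ≤ 1 := by
    rw [div_le_one (by positivity)]
    nlinarith [Real.pi_gt_three, log_gold_le_one, log_gold_pos]
  have hc0 : 0 < 3 * Real.log φ / Real.pi ^ 2 := by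
    apply div_pos (by nlinarith [log_gold_pos]) (by positivity)
  set c := 3 * Real.log φ / Real.pi ^ 2 with hcdef
  have hmain := main_est hN1
  rw [← L_eq_A N] at hmain
  have hLc : |(∑ n ∈ (Icc 1 (Nat.fib N)).filter (fun n => fibAlpha n ≤ N), Λ n) - c * x ^ 2|
      ≤ 10 * N * (1 + Real.log N) + c * (x ^ 2 - (N:ℝ) ^ 2) := by
    have h1 : (∑ n ∈ (Icc 1 (Nat.fib N)).filter (fun n => fibAlpha n ≤ N), Λ n) - c * x ^ 2
        = ((∑ n ∈ (Icc 1 (Nat.fib N)).filter (fun n => fibAlpha n ≤ N), Λ n) - c * (N:ℝ) ^ 2)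
          + (c * (N:ℝ) ^ 2 - c * x ^ 2) := by ring
    rw [h1]
    have h2 := abs_add_le ((∑ n ∈ (Icc 1 (Nat.fib N)).filter (fun n => fibAlpha n ≤ N), Λ n) - c * (N:ℝ) ^ 2)
      (c * (N:ℝ) ^ 2 - c * x ^ 2)
    have hx2 : (N:ℝ) ^ 2 ≤ x ^ 2 := by nlinarith
    have h4 : 0 ≤ c * (x ^ 2 - (N:ℝ) ^ 2) := mul_nonneg hc0.le (by linarith)
    have h3 : |c * (N:ℝ) ^ 2 - c * x ^ 2| = c * (x ^ 2 - (N:ℝ) ^ 2) := by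
      rw [abs_of_nonpos (by nlinarith)]
      ring
    linarith [hmain, h2, h3.le, h3.ge]
  have hfinal : 10 * (N:ℝ) * (1 + Real.log N) + c * (x ^ 2 - (N:ℝ) ^ 2) ≤ 22 * (x * Real.log x) := by
    have hb1 : 10 * (N:ℝ) * (1 + Real.log N) ≤ 10 * x * (2 * Real.log x) := by
      apply mul_le_mul (by linarith) (by linarith [Real.log_nonneg hNR]) ?_ (by linarith)
      have := Real.log_nonneg hNR
      linarith
    have hb2 : c * (x ^ 2 - (N:ℝ) ^ 2) ≤ 2 * x := by
      have hfac : x ^ 2 - (N:ℝ) ^ 2 ≤ 2 * x := by nlinarith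
      calc c * (x ^ 2 - (N:ℝ) ^ 2) ≤ 1 * (2 * x) := by
            apply mul_le_mul hc hfac (by nlinarith) zero_le_one
        _ = 2 * x := by ring
    have hb3 : 2 * x ≤ 2 * (x * Real.log x) := by nlinarith
    nlinarith
  rw [Real.norm_eq_abs, Real.norm_eq_abs]
  have hxlog : |x * Real.log x| = x * Real.log x := abs_of_nonneg (by nlinarith)
  rw [hxlog]
  calc |(∑ n ∈ (Icc 1 (Nat.fib N)).filter (fun n => fibAlpha n ≤ N), Λ n) - c * x ^ 2|
      ≤ 10 * N * (1 + Real.log N) + c * (x ^ 2 - (N:ℝ) ^ 2) := hLc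
    _ ≤ 22 * (x * Real.log x) := hfinal
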